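/- Fix a > 0 and A_f, B_f > 0 with A_f/B_f ≤ a². There exists a unique pair (A₀, ψ) with A₀ ≥ A_f and ψ > 0 such that ∫_{A_f}^{A₀} f(w)/(1 + w f(w)²) dw = A₀/(aψ) − 1/B_f and ∫_{A_f}^{A₀} f(w)²/(1 + w f(w)²) dw = ln(A₀³ B_f/(a⁴ψ²)). -/

import Mathlib

open Real intervalIntegral MeasureTheory

noncomputable def Ffun (φ : ℝ) : ℝ → ℝ := fun w =>
  (φ * w - 1 + Real.sqrt ((φ * w - 1) ^ 2 + 4 * w ^ 3)) / (2 * w ^ 2)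

lemma sqrtD_pos {φ w : ℝ} (hw : 0 < w) :
    0 < Real.sqrt ((φ * w - 1) ^ 2 + 4 * w ^ 3) := by
  apply Real.sqrt_pos.2; positivity

lemma sqrtD_sq {φ w : ℝ} (hw : 0 < w) :
    (Real.sqrt ((φ * w - 1) ^ 2 + 4 * w ^ 3)) ^ 2 = (φ * w - 1) ^ 2 + 4 * w ^ 3 :=
  Real.sq_sqrt (by positivity)

lemma F_pos {φ w : ℝ} (hw : 0 < w) : 0 < Ffun φ w := by
  unfold Ffun
  have h1 : |φ * w - 1| < Real.sqrt ((φ * w - 1) ^ 2 + 4 * w ^ 3) := by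
    rw [← Real.sqrt_sq_eq_abs]
    apply Real.sqrt_lt_sqrt (by positivity)
    nlinarith [pow_pos hw 3]
  have := neg_abs_le (φ * w - 1)
  apply div_pos (by nlinarith) (by positivity)

lemma denom_pos {φ w : ℝ} (hw : 0 < w) : 0 < 1 + w * (Ffun φ w) ^ 2 := by
  have := F_pos (φ := φ) hw; positivity

/-- quadratic identity -/
lemma F_quad {φ w : ℝ} (hw : 0 < w) :
    w ^ 2 * (Ffun φ w) ^ 2 = (φ * w - 1) * Ffun φ w + w := by
  have hs := sqrtD_sq (φ := φ) hw
  unfold Ffun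
  generalize Real.sqrt ((φ * w - 1) ^ 2 + 4 * w ^ 3) = S at hs ⊢
  field_simp
  nlinarith [hs]

lemma g1_eq {φ w : ℝ} (hw : 0 < w) :
    Ffun φ w / (1 + w * (Ffun φ w) ^ 2)
      = w / Real.sqrt ((φ * w - 1) ^ 2 + 4 * w ^ 3) := by
  have hs := sqrtD_pos (φ := φ) hw
  have hq := F_quad (φ := φ) hw
  have hd := denom_pos (φ := φ) hw
  have hF : 2 * w ^ 2 * Ffun φ w = (φ * w - 1) + Real.sqrt ((φ * w - 1) ^ 2 + 4 * w ^ 3) := by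
    unfold Ffun; field_simp
  have hs' : Real.sqrt ((φ * w - 1) ^ 2 + 4 * w ^ 3) = 2 * w ^ 2 * Ffun φ w - (φ * w - 1) := by
    linarith
  rw [div_eq_div_iff (by positivity) (by positivity), hs']
  nlinarith [hq]

lemma g2_lt {φ w : ℝ} (hw : 0 < w) :
    (Ffun φ w) ^ 2 / (1 + w * (Ffun φ w) ^ 2) < 1 / w := by
  have hd := denom_pos (φ := φ) hw
  rw [div_lt_div_iff₀ hd hw]
  nlinarith

lemma F_contOn (φ : ℝ) : ContinuousOn (Ffun φ) (Set.Ioi 0) := by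
  unfold Ffun
  apply ContinuousOn.div
  · apply ContinuousOn.add (by fun_prop)
    exact (Real.continuous_sqrt.comp (by fun_prop)).continuousOn
  · fun_prop
  · intro w hw; have : (0:ℝ) < w := hw; positivity

lemma g1_contOn (φ : ℝ) :
    ContinuousOn (fun w => Ffun φ w / (1 + w * (Ffun φ w) ^ 2)) (Set.Ioi 0) := by
  apply (F_contOn φ).div
  · exact continuousOn_const.add (continuousOn_id.mul ((F_contOn φ).pow 2))
  · intro w hw; exact (denom_pos hw).ne'

lemma g2_contOn (φ : ℝ) :
    ContinuousOn (fun w => (Ffun φ w) ^ 2 / (1 + w * (Ffun φ w) ^ 2)) (Set.Ioi 0) := by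
  apply ((F_contOn φ).pow 2).div
  · exact continuousOn_const.add (continuousOn_id.mul ((F_contOn φ).pow 2))
  · intro w hw; exact (denom_pos hw).ne'

lemma g1_lower {φ w : ℝ} (hw : 1 ≤ w) :
    (1 / Real.sqrt ((|φ| + 1) ^ 2 + 4)) * w ^ (-(1:ℝ)/2)
      ≤ Ffun φ w / (1 + w * (Ffun φ w) ^ 2) := by
  have hw0 : 0 < w := lt_of_lt_of_le one_pos hw
  rw [g1_eq hw0]
  set c : ℝ := (|φ| + 1) ^ 2 + 4 with hc
  have hc0 : 0 < c := by positivity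
  have h1 : φ * w ≤ |φ| * w := mul_le_mul_of_nonneg_right (le_abs_self φ) hw0.le
  have h2 : -(|φ| * w) ≤ φ * w := by nlinarith [neg_abs_le φ]
  have h3 : w ^ 2 ≤ w ^ 3 := by nlinarith
  have habs : (φ * w - 1) ^ 2 ≤ ((|φ| + 1) * w) ^ 2 :=
    sq_le_sq' (by nlinarith) (by nlinarith)
  have hD : (φ * w - 1) ^ 2 + 4 * w ^ 3 ≤ c * w ^ 3 := by
    nlinarith [habs, h3, sq_nonneg (|φ| + 1)]
  have hsD : Real.sqrt ((φ * w - 1) ^ 2 + 4 * w ^ 3) ≤ Real.sqrt c * Real.sqrt w * w := by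
    have e1 : Real.sqrt (c * w ^ 3) = Real.sqrt c * Real.sqrt w * w := by
      rw [show c * w ^ 3 = c * (w ^ 2 * w) by ring, Real.sqrt_mul hc0.le,
        Real.sqrt_mul (sq_nonneg w), Real.sqrt_sq hw0.le]
      ring
    exact (Real.sqrt_le_sqrt hD).trans e1.le
  have hrw : w ^ (-(1:ℝ)/2) = (Real.sqrt w)⁻¹ := by
    rw [Real.sqrt_eq_rpow, ← Real.rpow_neg hw0.le]
    norm_num
  rw [hrw]
  have hsw : 0 < Real.sqrt w := Real.sqrt_pos.2 hw0
  have hsc : 0 < Real.sqrt c := Real.sqrt_pos.2 hc0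
  have hsDpos := sqrtD_pos (φ := φ) hw0
  rw [one_div, ← mul_inv, ← one_div]
  rw [div_le_div_iff₀ (by positivity) hsDpos]
  nlinarith [hsD]


/-- Lemma 1: existence and uniqueness of the pair (A₀, ψ). -/
theorem exists_unique_A0_psi (a Af Bf : ℝ) (ha : 0 < a) (hAf : 0 < Af) (hBf : 0 < Bf)
    (hratio : Af / Bf ≤ a ^ 2) :
    let φ : ℝ := Af * Bf + 1 / Af - 1 / Bf
    let f : ℝ → ℝ := fun w =>
      (φ * w - 1 + Real.sqrt ((φ * w - 1) ^ 2 + 4 * w ^ 3)) / (2 * w ^ 2)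
    ∃! p : ℝ × ℝ, Af ≤ p.1 ∧ 0 < p.2 ∧
      (∫ w in Af..p.1, f w / (1 + w * (f w) ^ 2)) = p.1 / (a * p.2) - 1 / Bf ∧
      (∫ w in Af..p.1, (f w) ^ 2 / (1 + w * (f w) ^ 2))
        = Real.log (p.1 ^ 3 * Bf / (a ^ 4 * p.2 ^ 2)) := by
  intro φ f
  have hf : f = Ffun φ := rfl
  set g1 : ℝ → ℝ := fun w => Ffun φ w / (1 + w * (Ffun φ w) ^ 2) with hg1def
  set g2 : ℝ → ℝ := fun w => (Ffun φ w) ^ 2 / (1 + w * (Ffun φ w) ^ 2) with hg2def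
  set I1 : ℝ → ℝ := fun A => ∫ w in Af..A, g1 w with hI1def
  set I2 : ℝ → ℝ := fun A => ∫ w in Af..A, g2 w with hI2def
  -- basic facts
  have hsub : ∀ {X Y : ℝ}, 0 < X → 0 < Y → Set.uIcc X Y ⊆ Set.Ioi 0 := by
    intro X Y hX hY z hz
    rw [Set.mem_uIcc] at hz
    have : 0 < z := by rcases hz with ⟨h, _⟩ | ⟨h, _⟩ <;> linarith
    exact this
  have hint1 : ∀ {X Y : ℝ}, 0 < X → 0 < Y → IntervalIntegrable g1 volume X Y :=
    fun hX hY => ((g1_contOn φ).mono (hsub hX hY)).intervalIntegrable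
  have hint2 : ∀ {X Y : ℝ}, 0 < X → 0 < Y → IntervalIntegrable g2 volume X Y :=
    fun hX hY => ((g2_contOn φ).mono (hsub hX hY)).intervalIntegrable
  have hg1pos : ∀ w : ℝ, 0 < w → 0 < g1 w := fun w hw =>
    div_pos (F_pos hw) (denom_pos hw)
  -- adjacent-interval additivity
  have hI1add : ∀ {X Y : ℝ}, Af ≤ X → Af ≤ Y → I1 Y = I1 X + ∫ w in X..Y, g1 w := by
    intro X Y hX hY
    rw [hI1def]
    exact (integral_add_adjacent_intervals (hint1 hAf (lt_of_lt_of_le hAf hX))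
      (hint1 (lt_of_lt_of_le hAf hX) (lt_of_lt_of_le hAf hY))).symm
  have hI2add : ∀ {X Y : ℝ}, Af ≤ X → Af ≤ Y → I2 Y = I2 X + ∫ w in X..Y, g2 w := by
    intro X Y hX hY
    rw [hI2def]
    exact (integral_add_adjacent_intervals (hint2 hAf (lt_of_lt_of_le hAf hX))
      (hint2 (lt_of_lt_of_le hAf hX) (lt_of_lt_of_le hAf hY))).symm
  -- I1 strictly increasing, nonnegative
  have hI1pos : ∀ {X Y : ℝ}, Af ≤ X → X < Y → 0 < ∫ w in X..Y, g1 w := by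
    intro X Y hX hXY
    have hX0 := lt_of_lt_of_le hAf hX
    exact intervalIntegral_pos_of_pos_on (hint1 hX0 (hX0.trans hXY))
      (fun x hx => hg1pos x (hX0.trans hx.1)) hXY
  have hI1mono : ∀ {X Y : ℝ}, Af ≤ X → X < Y → I1 X < I1 Y := by
    intro X Y hX hXY
    rw [hI1add hX (hX.trans hXY.le)]
    linarith [hI1pos hX hXY]
  have hI1nonneg : ∀ {X : ℝ}, Af ≤ X → 0 ≤ I1 X := by
    intro X hX
    rcases eq_or_lt_of_le hX with h | h
    · simp [hI1def, ← h, integral_same]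
    · have h0 : I1 Af = 0 := by simp [hI1def]
      linarith [hI1mono le_rfl h]
  -- I2 upper bound
  have hI2le : ∀ {X : ℝ}, Af ≤ X → I2 X ≤ Real.log X - Real.log Af := by
    intro X hX
    have hX0 := lt_of_lt_of_le hAf hX
    have hlog : (∫ w in Af..X, 1 / w) = Real.log X - Real.log Af := by
      rw [integral_one_div (by intro h; exact absurd ((hsub hAf hX0) h) (by simp)),
        Real.log_div hX0.ne' hAf.ne']
    rw [hI2def, ← hlog]
    apply integral_mono_on hX (hint2 hAf hX0)
      (((continuousOn_const.div continuousOn_id (fun x hx => ne_of_gt hx)).mono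
        (hsub hAf hX0)).intervalIntegrable)
    intro x hx
    exact (g2_lt (lt_of_lt_of_le hAf hx.1)).le
  -- the function G
  set G : ℝ → ℝ := fun A => Real.log (A * Bf / a ^ 2) - I2 A
    + 2 * Real.log (I1 A + 1 / Bf) with hGdef
  have hGmono : ∀ {X Y : ℝ}, Af ≤ X → X < Y → G X < G Y := by
    intro X Y hX hXY
    have hY : Af ≤ Y := hX.trans hXY.le
    have hX0 : 0 < X := lt_of_lt_of_le hAf hX
    have hY0 : 0 < Y := lt_of_lt_of_le hAf hY
    have h2 : I2 Y - I2 X ≤ Real.log Y - Real.log X := by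
      have hlog : (∫ w in X..Y, 1 / w) = Real.log Y - Real.log X := by
        rw [integral_one_div (fun h => absurd (hsub hX0 hY0 h) (by simp)),
          Real.log_div hY0.ne' hX0.ne']
      have hmon : (∫ w in X..Y, g2 w) ≤ ∫ w in X..Y, 1 / w := by
        apply integral_mono_on hXY.le (hint2 hX0 hY0)
          (((continuousOn_const.div continuousOn_id fun x hx => ne_of_gt hx).mono
            (hsub hX0 hY0)).intervalIntegrable)
        exact fun x hx => (g2_lt (lt_of_lt_of_le hX0 hx.1)).le
      rw [hI2add hX hY]
      linarith [hmon, hlog]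
    have h1 : Real.log (I1 X + 1 / Bf) < Real.log (I1 Y + 1 / Bf) := by
      apply Real.log_lt_log
      · have := hI1nonneg hX; positivity
      · linarith [hI1mono hX hXY]
    have h0 : Real.log (Y * Bf / a ^ 2) - Real.log (X * Bf / a ^ 2)
        = Real.log Y - Real.log X := by
      rw [Real.log_div (by positivity) (by positivity),
        Real.log_div (by positivity) (by positivity),
        Real.log_mul hY0.ne' hBf.ne', Real.log_mul hX0.ne' hBf.ne']
      ring
    show Real.log (X * Bf / a ^ 2) - I2 X + 2 * Real.log (I1 X + 1 / Bf)
      < Real.log (Y * Bf / a ^ 2) - I2 Y + 2 * Real.log (I1 Y + 1 / Bf)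
    linarith
  have hGAf : G Af ≤ 0 := by
    have e1 : I1 Af = 0 := integral_same
    have e2 : I2 Af = 0 := integral_same
    show Real.log (Af * Bf / a ^ 2) - I2 Af + 2 * Real.log (I1 Af + 1 / Bf) ≤ 0
    rw [e1, e2, zero_add, sub_zero]
    have harg : Af * Bf / a ^ 2 * (1 / Bf) ^ 2 = Af / Bf / a ^ 2 := by
      field_simp
    have hcomb : Real.log (Af * Bf / a ^ 2) + 2 * Real.log (1 / Bf)
        = Real.log (Af / Bf / a ^ 2) := by
      rw [← harg, Real.log_mul (by positivity) (by positivity), Real.log_pow]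
      push_cast; ring
    have hle : Af / Bf / a ^ 2 ≤ 1 := by
      rw [div_le_one (by positivity)]
      exact hratio
    linarith [hcomb, Real.log_nonpos (by positivity) hle]
  have hbig : ∃ B, Af ≤ B ∧ 0 ≤ G B := by
    set c : ℝ := (|φ| + 1) ^ 2 + 4 with hc
    have hc0 : 0 < c := by positivity
    have hsc : 0 < Real.sqrt c := Real.sqrt_pos.2 hc0
    set M : ℝ := max Af 1 with hM
    have hM1 : (1:ℝ) ≤ M := le_max_right _ _
    have hMAf : Af ≤ M := le_max_left _ _
    have hM0 : 0 < M := lt_of_lt_of_le one_pos hM1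
    set L : ℝ := |Real.log (Af * Bf / a ^ 2)| with hL
    set T : ℝ := Real.exp L with hT
    have hT0 : 0 < T := Real.exp_pos L
    set B : ℝ := (Real.sqrt M + Real.sqrt c * T) ^ 2 with hB
    have hsB : Real.sqrt B = Real.sqrt M + Real.sqrt c * T :=
      Real.sqrt_sq (by positivity)
    have hMB : M ≤ B := by
      have h2 := Real.sqrt_nonneg M
      have h3 : Real.sqrt M ^ 2 ≤ (Real.sqrt M + Real.sqrt c * T) ^ 2 :=
        pow_le_pow_left₀ h2 (by nlinarith [mul_pos hsc hT0]) 2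
      rw [Real.sq_sqrt hM0.le] at h3
      exact h3
    have hBAf : Af ≤ B := hMAf.trans hMB
    have hB0 : 0 < B := lt_of_lt_of_le hM0 hMB
    refine ⟨B, hBAf, ?_⟩
    -- lower bound on I1 B
    have hint_r : IntervalIntegrable (fun w => (1 / Real.sqrt c) * w ^ (-(1:ℝ)/2))
        volume M B :=
      (intervalIntegral.intervalIntegrable_rpow' (by norm_num)).const_mul _
    have hrint : (∫ w in M..B, (1 / Real.sqrt c) * w ^ (-(1:ℝ)/2))
        = (1 / Real.sqrt c) * (2 * (Real.sqrt B - Real.sqrt M)) := by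
      rw [intervalIntegral.integral_const_mul, integral_rpow (Or.inl (by norm_num))]
      have h12 : (-(1:ℝ)/2) + 1 = 1/2 := by norm_num
      rw [h12, ← Real.sqrt_eq_rpow, ← Real.sqrt_eq_rpow]
      ring
    have hI1B : 2 * T ≤ I1 B := by
      have hmon : (∫ w in M..B, (1 / Real.sqrt c) * w ^ (-(1:ℝ)/2)) ≤ ∫ w in M..B, g1 w :=
        integral_mono_on hMB hint_r (hint1 hM0 hB0)
          (fun x hx => g1_lower (hM1.trans hx.1))
      have heval : (1 / Real.sqrt c) * (2 * (Real.sqrt B - Real.sqrt M)) = 2 * T := by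
        rw [hsB]; field_simp; ring
      have hI1M : 0 ≤ I1 M := hI1nonneg hMAf
      rw [hI1add hMAf hBAf]
      linarith [hmon, hrint, heval]
    have hTlog : L ≤ Real.log (I1 B + 1 / Bf) := by
      have hTle : T ≤ I1 B + 1 / Bf := by
        have : 0 < 1 / Bf := by positivity
        linarith
      calc L = Real.log T := (Real.log_exp L).symm
        _ ≤ _ := (Real.log_le_log_iff hT0 (by linarith)).2 hTle
    have h2 : I2 B ≤ Real.log B - Real.log Af := hI2le hBAf
    have hBexp : Real.log (B * Bf / a ^ 2)
        = Real.log B + Real.log Bf - Real.log (a ^ 2) := by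
      rw [Real.log_div (by positivity) (by positivity), Real.log_mul hB0.ne' hBf.ne']
    have hAfexp : Real.log (Af * Bf / a ^ 2)
        = Real.log Af + Real.log Bf - Real.log (a ^ 2) := by
      rw [Real.log_div (by positivity) (by positivity), Real.log_mul hAf.ne' hBf.ne']
    have hLlb : -L ≤ Real.log (Af * Bf / a ^ 2) := neg_abs_le _
    show 0 ≤ Real.log (B * Bf / a ^ 2) - I2 B + 2 * Real.log (I1 B + 1 / Bf)
    have hLnn : 0 ≤ L := abs_nonneg _
    linarith
  obtain ⟨B, hBAf, hGB⟩ := hbig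
  have hGcont : ContinuousOn G (Set.Icc Af B) := by
    have hB0 : 0 < B := lt_of_lt_of_le hAf hBAf
    have huIcc : Set.uIcc Af B = Set.Icc Af B := Set.uIcc_of_le hBAf
    have hIccsub : Set.Icc Af B ⊆ Set.Ioi 0 := fun z hz => lt_of_lt_of_le hAf hz.1
    have hI1cont : ContinuousOn I1 (Set.Icc Af B) := by
      have := intervalIntegral.continuousOn_primitive_interval
        (a := Af) (b := B) (μ := volume) (f := g1)
        (by rw [huIcc]; exact ((g1_contOn φ).mono hIccsub).integrableOn_Icc)
      rwa [huIcc] at this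
    have hI2cont : ContinuousOn I2 (Set.Icc Af B) := by
      have := intervalIntegral.continuousOn_primitive_interval
        (a := Af) (b := B) (μ := volume) (f := g2)
        (by rw [huIcc]; exact ((g2_contOn φ).mono hIccsub).integrableOn_Icc)
      rwa [huIcc] at this
    apply ContinuousOn.add
    · apply ContinuousOn.sub _ hI2cont
      apply ContinuousOn.log
      · fun_prop
      · intro x hx
        have : 0 < x := hIccsub hx
        positivity
    · apply ContinuousOn.mul continuousOn_const
      apply ContinuousOn.log (hI1cont.add continuousOn_const)
      intro x hx
      have h1 := hI1nonneg hx.1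
      have : 0 < 1 / Bf := by positivity
      show I1 x + 1 / Bf ≠ 0
      linarith
  obtain ⟨A₀, hA₀mem, hGA₀⟩ : ∃ A₀ ∈ Set.Icc Af B, G A₀ = 0 := by
    have h0 : (0:ℝ) ∈ Set.Icc (G Af) (G B) := ⟨hGAf, hGB⟩
    obtain ⟨A₀, hmem, heq⟩ := intermediate_value_Icc hBAf hGcont h0
    exact ⟨A₀, hmem, heq⟩
  have hA₀ : Af ≤ A₀ := hA₀mem.1
  -- equivalence of the system with (G p.1 = 0, p.2 determined)
  have hequiv : ∀ p : ℝ × ℝ,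
      (Af ≤ p.1 ∧ 0 < p.2 ∧
        I1 p.1 = p.1 / (a * p.2) - 1 / Bf ∧
        I2 p.1 = Real.log (p.1 ^ 3 * Bf / (a ^ 4 * p.2 ^ 2)))
      ↔ (Af ≤ p.1 ∧ G p.1 = 0 ∧ p.2 = p.1 / (a * (I1 p.1 + 1 / Bf))) := by
    rintro ⟨A, ψ⟩
    dsimp only
    have hGA : ∀ {A : ℝ}, G A = Real.log (A * Bf / a ^ 2) - I2 A
        + 2 * Real.log (I1 A + 1 / Bf) := fun {A} => rfl
    constructor
    · rintro ⟨hA, hψ, h1, h2⟩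
      have hA0 : 0 < A := lt_of_lt_of_le hAf hA
      have hT : 0 < I1 A + 1 / Bf := by
        have := hI1nonneg hA
        have : (0:ℝ) < 1 / Bf := by positivity
        linarith [hI1nonneg hA]
      have hψval : ψ = A / (a * (I1 A + 1 / Bf)) := by
        rw [eq_div_iff (by positivity)]
        have h1' : I1 A + 1 / Bf = A / (a * ψ) := by linarith
        rw [h1']
        field_simp
      have harg : A ^ 3 * Bf / (a ^ 4 * ψ ^ 2)
          = (A * Bf / a ^ 2) * (I1 A + 1 / Bf) ^ 2 := by
        rw [hψval]
        field_simp
      refine ⟨hA, ?_, hψval⟩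
      rw [hGA]
      have h2' : I2 A = Real.log (A * Bf / a ^ 2) + 2 * Real.log (I1 A + 1 / Bf) := by
        rw [h2, harg, Real.log_mul (by positivity) (by positivity), Real.log_pow]
        push_cast; ring
      linarith [h2']
    · rintro ⟨hA, hG0, hψval⟩
      have hA0 : 0 < A := lt_of_lt_of_le hAf hA
      have hT : 0 < I1 A + 1 / Bf := by
        have : (0:ℝ) < 1 / Bf := by positivity
        linarith [hI1nonneg hA]
      have hψpos : 0 < ψ := by rw [hψval]; positivity
      refine ⟨hA, hψpos, ?_, ?_⟩
      · rw [hψval]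
        field_simp
        ring
      · have harg : A ^ 3 * Bf / (a ^ 4 * ψ ^ 2)
            = (A * Bf / a ^ 2) * (I1 A + 1 / Bf) ^ 2 := by
          rw [hψval]
          field_simp
        rw [harg, Real.log_mul (by positivity) (by positivity), Real.log_pow]
        rw [hGA] at hG0
        push_cast
        linarith
  refine ⟨(A₀, A₀ / (a * (I1 A₀ + 1 / Bf))), ?_, ?_⟩
  · exact (hequiv (A₀, A₀ / (a * (I1 A₀ + 1 / Bf)))).2 ⟨hA₀, hGA₀, rfl⟩
  · rintro ⟨X, ψ⟩ hp
    obtain ⟨hX, hGX, hψ⟩ := (hequiv (X, ψ)).1 hp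
    have hXA : X = A₀ := by
      rcases lt_trichotomy X A₀ with h | h | h
      · exact absurd (hGmono hX h) (by rw [hGX, hGA₀]; exact lt_irrefl 0)
      · exact h
      · exact absurd (hGmono hA₀ h) (by rw [hGX, hGA₀]; exact lt_irrefl 0)
    subst hXA
    simp only [Prod.mk.injEq]
    exact ⟨trivial, hψ⟩
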